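/- Let A be a finite-dimensional Frobenius algebra over a field K. The category of right A-modules is isomorphic to the category of right A-comodules (with respect to the Frobenius comultiplication δ and counit ε), via the functor that sends a right A-module (M, m) to the right A-comodule (M, ∇_m) and is the identity on underlying maps; its inverse sends a right A-comodule (M, ∇) to the right A-module (M, m_∇). -/
import Mathlib


open TensorProduct CategoryTheory

universe u

/-- A right module over the `K`-algebra `A`: a `K`-vector space `V` together with an
action map `act : V ⊗ A → V` satisfying the right-module axioms. -/
structure RightModuleOver (K : Type u) [Field K] (A : Type u) [Ring A] [Algebra K A] :
    Type (u + 1) where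
  V : Type u
  [addcg : AddCommGroup V]
  [mod : Module K V]
  act : V ⊗[K] A →ₗ[K] V
  act_act : ∀ (x : V) (a b : A), act (act (x ⊗ₜ[K] a) ⊗ₜ[K] b) = act (x ⊗ₜ[K] (a * b))
  act_one : ∀ x : V, act (x ⊗ₜ[K] (1 : A)) = x

attribute [instance] RightModuleOver.addcg RightModuleOver.mod

/-- A right comodule over `A` relative to the comultiplication `δ` with counit `ε`:
a `K`-vector space `V` with `co : V → V ⊗ A` such that
`(co ⊗ id) ∘ co = (id ⊗ δ) ∘ co` and `(id ⊗ ε) ∘ co = id`. -/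
structure RightComoduleOver (K : Type u) [Field K] (A : Type u) [Ring A] [Algebra K A]
    (δ : A →ₗ[K] A ⊗[K] A) (ε : A →ₗ[K] K) : Type (u + 1) where
  V : Type u
  [addcg : AddCommGroup V]
  [mod : Module K V]
  co : V →ₗ[K] V ⊗[K] A
  co_coassoc : ∀ x : V,
    (TensorProduct.assoc K V A A)
        ((TensorProduct.map co (LinearMap.id : A →ₗ[K] A)) (co x)) =
      (TensorProduct.map (LinearMap.id : V →ₗ[K] V) δ) (co x)
  co_counit : ∀ x : V,
    (TensorProduct.rid K V)
        ((TensorProduct.map (LinearMap.id : V →ₗ[K] V) ε) (co x)) = x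

attribute [instance] RightComoduleOver.addcg RightComoduleOver.mod

variable (K : Type u) [Field K] (A : Type u) [Ring A] [Algebra K A]
  (δ : A →ₗ[K] A ⊗[K] A) (ε : A →ₗ[K] K)

/-- The category of right `A`-modules; morphisms are `K`-linear maps commuting with
the actions. -/
instance : Category (RightModuleOver K A) where
  Hom X Y := {f : X.V →ₗ[K] Y.V // ∀ (x : X.V) (a : A),
    f (X.act (x ⊗ₜ[K] a)) = Y.act (f x ⊗ₜ[K] a)}
  id X := ⟨LinearMap.id, fun _ _ => rfl⟩
  comp f g := ⟨g.1 ∘ₗ f.1, fun x a => by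
    simp only [LinearMap.comp_apply, f.2, g.2]⟩
  id_comp f := by apply Subtype.ext; rfl
  comp_id f := by apply Subtype.ext; rfl
  assoc f g h := by apply Subtype.ext; rfl

/-- The category of right `A`-comodules; morphisms are `K`-linear maps commuting with
the comodule structure maps. -/
instance : Category (RightComoduleOver K A δ ε) where
  Hom X Y := {f : X.V →ₗ[K] Y.V // ∀ x : X.V,
    Y.co (f x) = (TensorProduct.map f (LinearMap.id : A →ₗ[K] A)) (X.co x)}
  id X := ⟨LinearMap.id, fun x => by
    simp only [LinearMap.id_apply, TensorProduct.map_id, LinearMap.id_coe, id_eq]⟩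
  comp f g := ⟨g.1 ∘ₗ f.1, fun x => by
    simp only [LinearMap.comp_apply, f.2, g.2]
    rw [← LinearMap.comp_apply, ← TensorProduct.map_comp]
    rfl⟩
  id_comp f := by apply Subtype.ext; rfl
  comp_id f := by apply Subtype.ext; rfl
  assoc f g h := by apply Subtype.ext; rfl

/-- The comodule structure map `∇_m = (m ⊗ id_A) ∘ (id_M ⊗ δ) ∘ (x ↦ x ⊗ 1_A)`. -/
noncomputable def nablaOf {M : Type u} [AddCommGroup M] [Module K M]
    (m : M ⊗[K] A →ₗ[K] M) : M →ₗ[K] M ⊗[K] A :=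
  (TensorProduct.map m (LinearMap.id : A →ₗ[K] A)) ∘ₗ
    (TensorProduct.assoc K M A A).symm.toLinearMap ∘ₗ
      (TensorProduct.map (LinearMap.id : M →ₗ[K] M) δ) ∘ₗ
        ((TensorProduct.mk K M A).flip 1)

/-- The module structure map `m_∇ = (id_M ⊗ ε) ∘ (id_M ⊗ μ) ∘ (∇ ⊗ id_A)`. -/
noncomputable def modOf {M : Type u} [AddCommGroup M] [Module K M]
    (co : M →ₗ[K] M ⊗[K] A) : M ⊗[K] A →ₗ[K] M :=
  (TensorProduct.rid K M).toLinearMap ∘ₗ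
    (TensorProduct.map (LinearMap.id : M →ₗ[K] M) ε) ∘ₗ
      (TensorProduct.map (LinearMap.id : M →ₗ[K] M) (LinearMap.mul' K A)) ∘ₗ
        (TensorProduct.assoc K M A A).toLinearMap ∘ₗ
          (TensorProduct.map co (LinearMap.id : A →ₗ[K] A))

section AuxHelpers

variable {K A}

/-- The map `u ⊗ c ↦ ε (c * a) • u`. -/
noncomputable def PsiAux {M : Type u} [AddCommGroup M] [Module K M] (a : A) :
    M ⊗[K] A →ₗ[K] M :=
  (TensorProduct.rid K M).toLinearMap ∘ₗ
    (TensorProduct.map (LinearMap.id : M →ₗ[K] M) ε) ∘ₗ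
      (TensorProduct.map (LinearMap.id : M →ₗ[K] M) (LinearMap.mulRight K a))

lemma PsiAux_tmul {M : Type u} [AddCommGroup M] [Module K M] (a : A) (v : M) (c : A) :
    PsiAux ε a (v ⊗ₜ[K] c) = ε (c * a) • v := by
  simp [PsiAux]

lemma modOf_tmul {M : Type u} [AddCommGroup M] [Module K M]
    (co : M →ₗ[K] M ⊗[K] A) (x : M) (a : A) :
    modOf K A ε co (x ⊗ₜ[K] a) = PsiAux ε a (co x) := by
  have h : ∀ u : M ⊗[K] A,
      (TensorProduct.rid K M)
        ((TensorProduct.map (LinearMap.id : M →ₗ[K] M) ε)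
          ((TensorProduct.map (LinearMap.id : M →ₗ[K] M) (LinearMap.mul' K A))
            ((TensorProduct.assoc K M A A) (u ⊗ₜ[K] a)))) = PsiAux ε a u := by
    intro u
    induction u using TensorProduct.induction_on with
    | zero => simp
    | tmul y c => simp [PsiAux, LinearMap.mul'_apply]
    | add u v hu hv => simp only [add_tmul, map_add, hu, hv]
  simpa [modOf] using h (co x)

lemma PsiAux_natural {M N : Type u} [AddCommGroup M] [Module K M]
    [AddCommGroup N] [Module K N] (f : M →ₗ[K] N) (a : A) (u : M ⊗[K] A) :
    f (PsiAux ε a u) = PsiAux ε a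
      ((TensorProduct.map f (LinearMap.id : A →ₗ[K] A)) u) := by
  induction u using TensorProduct.induction_on with
  | zero => simp
  | tmul y c => simp [PsiAux_tmul]
  | add u v hu hv => simp only [map_add, hu, hv]

lemma rmo_ext (X Y : RightModuleOver K A) (hV : X.V = Y.V)
    (hg : HEq X.addcg Y.addcg) (hm : HEq X.mod Y.mod) (ha : HEq X.act Y.act) : X = Y := by
  cases X; cases Y
  cases hV
  obtain rfl := eq_of_heq hg
  obtain rfl := eq_of_heq hm
  obtain rfl := eq_of_heq ha
  rfl

lemma rcmo_ext (X Y : RightComoduleOver K A δ ε) (hV : X.V = Y.V)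
    (hg : HEq X.addcg Y.addcg) (hm : HEq X.mod Y.mod) (hc : HEq X.co Y.co) : X = Y := by
  cases X; cases Y
  cases hV
  obtain rfl := eq_of_heq hg
  obtain rfl := eq_of_heq hm
  obtain rfl := eq_of_heq hc
  rfl

end AuxHelpers

set_option maxHeartbeats 10000000
set_option synthInstance.maxHeartbeats 400000

section MainHelpers

variable {K A}
variable (s : Finset (A × A))

lemma nabla_eq (hs : δ 1 = ∑ p ∈ s, p.1 ⊗ₜ[K] p.2)
    (M : Type u) [AddCommGroup M] [Module K M]
    (m : M ⊗[K] A →ₗ[K] M) (x : M) :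
    nablaOf K A δ m x = ∑ p ∈ s, m (x ⊗ₜ[K] p.1) ⊗ₜ[K] p.2 := by
  simp only [nablaOf, LinearMap.comp_apply, LinearMap.flip_apply, TensorProduct.mk_apply,
    TensorProduct.map_tmul, LinearMap.id_apply, LinearEquiv.coe_coe]
  rw [hs]
  simp [TensorProduct.tmul_sum, TensorProduct.assoc_symm_tmul]

lemma Hcounit (hs : δ 1 = ∑ p ∈ s, p.1 ⊗ₜ[K] p.2)
    (key_counit_r : ∀ c : A, (∑ p ∈ s, ε (p.2 * c) • p.1) = c)
    (X : RightModuleOver K A) (x : X.V) :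
    (TensorProduct.rid K X.V)
      ((TensorProduct.map (LinearMap.id : X.V →ₗ[K] X.V) ε)
        (nablaOf K A δ X.act x)) = x := by
  rw [nabla_eq δ s hs _ X.act x]
  have h1 : (∑ p ∈ s, ε p.2 • X.act (x ⊗ₜ[K] p.1)) = X.act (x ⊗ₜ[K] (1 : A)) := by
    have h2 := key_counit_r 1
    simp only [mul_one] at h2
    rw [← h2]
    simp [TensorProduct.tmul_sum, TensorProduct.tmul_smul]
  simp only [map_sum, TensorProduct.map_tmul, LinearMap.id_apply,
    TensorProduct.rid_tmul]
  rw [h1, X.act_one]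

lemma Hcoassoc (hs : δ 1 = ∑ p ∈ s, p.1 ⊗ₜ[K] p.2)
    (keyL : ∀ c : A, δ c = ∑ p ∈ s, (c * p.1) ⊗ₜ[K] p.2)
    (hcoassoc : ∀ a : A,
      (TensorProduct.assoc K A A A)
          ((TensorProduct.map δ (LinearMap.id : A →ₗ[K] A)) (δ a)) =
        (TensorProduct.map (LinearMap.id : A →ₗ[K] A) δ) (δ a))
    (X : RightModuleOver K A) (x : X.V) :
    (TensorProduct.assoc K X.V A A)
      ((TensorProduct.map (nablaOf K A δ X.act) (LinearMap.id : A →ₗ[K] A))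
        (nablaOf K A δ X.act x)) =
    (TensorProduct.map (LinearMap.id : X.V →ₗ[K] X.V) δ)
      (nablaOf K A δ X.act x) := by
  have dagger : (∑ p ∈ s, p.1 ⊗ₜ[K] (δ p.2)) =
      ∑ p ∈ s, ∑ q ∈ s, (p.1 * q.1) ⊗ₜ[K] (q.2 ⊗ₜ[K] p.2) := by
    have h := hcoassoc 1
    rw [hs] at h
    simp only [map_sum, TensorProduct.map_tmul, LinearMap.id_apply] at h
    calc (∑ p ∈ s, p.1 ⊗ₜ[K] (δ p.2))
        = ∑ p ∈ s, (TensorProduct.assoc K A A A) ((δ p.1) ⊗ₜ[K] p.2) := h.symm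
      _ = ∑ p ∈ s, ∑ q ∈ s, (p.1 * q.1) ⊗ₜ[K] (q.2 ⊗ₜ[K] p.2) := by
          refine Finset.sum_congr rfl fun p _ => ?_
          rw [keyL p.1]
          simp [TensorProduct.sum_tmul, TensorProduct.assoc_tmul]
  have happ := congrArg (TensorProduct.map (X.act ∘ₗ (TensorProduct.mk K X.V A x))
    (LinearMap.id : A ⊗[K] A →ₗ[K] A ⊗[K] A)) dagger
  simp only [map_sum, TensorProduct.map_tmul, LinearMap.id_apply,
    LinearMap.comp_apply, TensorProduct.mk_apply] at happ
  rw [nabla_eq δ s hs _ X.act x]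
  simp only [map_sum, TensorProduct.map_tmul, LinearMap.id_apply]
  rw [happ]
  refine Finset.sum_congr rfl fun p _ => ?_
  rw [nabla_eq δ s hs _ X.act]
  simp [TensorProduct.sum_tmul, TensorProduct.assoc_tmul, X.act_act]

lemma PsiOne (M : Type u) [AddCommGroup M] [Module K M] (u : M ⊗[K] A) :
    PsiAux ε (1 : A) u =
      (TensorProduct.rid K M) ((TensorProduct.map (LinearMap.id : M →ₗ[K] M) ε) u) := by
  induction u using TensorProduct.induction_on with
  | zero => simp
  | tmul y c => simp [PsiAux_tmul]
  | add u v hu hv => simp only [map_add, hu, hv]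

lemma Hact_one (X : RightComoduleOver K A δ ε) (x : X.V) :
    modOf K A ε X.co (x ⊗ₜ[K] (1 : A)) = x := by
  rw [modOf_tmul, PsiOne, X.co_counit]

lemma Hact_act (keyL : ∀ c : A, δ c = ∑ p ∈ s, (c * p.1) ⊗ₜ[K] p.2)
    (key_counit_r : ∀ c : A, (∑ p ∈ s, ε (p.2 * c) • p.1) = c)
    (X : RightComoduleOver K A δ ε) (x : X.V) (a b : A) :
    modOf K A ε X.co (modOf K A ε X.co (x ⊗ₜ[K] a) ⊗ₜ[K] b) =
      modOf K A ε X.co (x ⊗ₜ[K] (a * b)) := by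
  rw [modOf_tmul, modOf_tmul, modOf_tmul, PsiAux_natural (ε := ε) X.co a (X.co x)]
  have hco : (TensorProduct.map X.co (LinearMap.id : A →ₗ[K] A)) (X.co x) =
      (TensorProduct.assoc K X.V A A).symm
        ((TensorProduct.map (LinearMap.id : X.V →ₗ[K] X.V) δ) (X.co x)) := by
    rw [← X.co_coassoc x, LinearEquiv.symm_apply_apply]
  rw [hco]
  have claim2 : (PsiAux ε b) ∘ₗ (PsiAux (M := X.V ⊗[K] A) ε a) ∘ₗ
      ((TensorProduct.assoc K X.V A A).symm.toLinearMap) ∘ₗ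
        (TensorProduct.map (LinearMap.id : X.V →ₗ[K] X.V) δ) =
      PsiAux ε (a * b) := by
    refine TensorProduct.ext' fun y c => ?_
    simp only [LinearMap.comp_apply, LinearEquiv.coe_coe]
    rw [TensorProduct.map_tmul, LinearMap.id_apply, keyL c]
    rw [TensorProduct.tmul_sum, map_sum, map_sum, map_sum]
    have hA : (∑ q ∈ s, (ε (q.2 * a) * ε (c * q.1 * b))) = ε (c * (a * b)) := by
      have h2 := congrArg (fun z => ε (c * z * b)) (key_counit_r a)
      simp only [Finset.mul_sum, Finset.sum_mul, map_sum, mul_smul_comm,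
        smul_mul_assoc, map_smul, smul_eq_mul] at h2
      rw [← mul_assoc]
      exact h2
    calc (∑ q ∈ s, PsiAux ε b (PsiAux ε a
            ((TensorProduct.assoc K X.V A A).symm (y ⊗ₜ[K] ((c * q.1) ⊗ₜ[K] q.2)))))
        = ∑ q ∈ s, (ε (q.2 * a) * ε (c * q.1 * b)) • y := by
          refine Finset.sum_congr rfl fun q _ => ?_
          rw [TensorProduct.assoc_symm_tmul, PsiAux_tmul, map_smul, PsiAux_tmul,
            smul_smul]
      _ = ε (c * (a * b)) • y := by rw [← Finset.sum_smul, hA]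
      _ = PsiAux ε (a * b) (y ⊗ₜ[K] c) := by rw [PsiAux_tmul]
  have h3 := LinearMap.congr_fun claim2 (X.co x)
  simp only [LinearMap.comp_apply, LinearEquiv.coe_coe] at h3
  rw [h3]

lemma HmapF (hs : δ 1 = ∑ p ∈ s, p.1 ⊗ₜ[K] p.2)
    (X Y : RightModuleOver K A) (f : X ⟶ Y) (x : X.V) :
    nablaOf K A δ Y.act (f.1 x) =
      (TensorProduct.map f.1 (LinearMap.id : A →ₗ[K] A)) (nablaOf K A δ X.act x) := by
  rw [nabla_eq δ s hs _ Y.act, nabla_eq δ s hs _ X.act]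
  simp [f.2]

lemma HmapG (X Y : RightComoduleOver K A δ ε) (f : X ⟶ Y) (x : X.V) (a : A) :
    f.1 (modOf K A ε X.co (x ⊗ₜ[K] a)) = modOf K A ε Y.co (f.1 x ⊗ₜ[K] a) := by
  rw [modOf_tmul, modOf_tmul, PsiAux_natural (ε := ε) f.1 a (X.co x), f.2 x]

lemma Hround1 (hs : δ 1 = ∑ p ∈ s, p.1 ⊗ₜ[K] p.2)
    (key_counit_r : ∀ c : A, (∑ p ∈ s, ε (p.2 * c) • p.1) = c)
    (X : RightModuleOver K A) :
    modOf K A ε (nablaOf K A δ X.act) = X.act := by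
  refine TensorProduct.ext' fun x a => ?_
  rw [modOf_tmul, nabla_eq δ s hs _ X.act]
  rw [map_sum]
  have h1 : (∑ p ∈ s, PsiAux ε a (X.act (x ⊗ₜ[K] p.1) ⊗ₜ[K] p.2)) =
      X.act (x ⊗ₜ[K] ∑ p ∈ s, ε (p.2 * a) • p.1) := by
    rw [TensorProduct.tmul_sum, map_sum]
    refine Finset.sum_congr rfl fun p _ => ?_
    rw [PsiAux_tmul, TensorProduct.tmul_smul, map_smul]
  rw [h1, key_counit_r a]

lemma Hround2 (hs : δ 1 = ∑ p ∈ s, p.1 ⊗ₜ[K] p.2)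
    (key_counit_l : ∀ c : A, (∑ p ∈ s, ε (c * p.1) • p.2) = c)
    (X : RightComoduleOver K A δ ε) :
    nablaOf K A δ (modOf K A ε X.co) = X.co := by
  apply LinearMap.ext
  intro x
  rw [nabla_eq δ s hs _ _ x]
  have h1 : ∀ p : A × A, modOf K A ε X.co (x ⊗ₜ[K] p.1) = PsiAux ε p.1 (X.co x) :=
    fun p => modOf_tmul _ _ _ _
  simp only [h1]
  have claim : ∀ u : X.V ⊗[K] A, (∑ p ∈ s, PsiAux ε p.1 u ⊗ₜ[K] p.2) = u := by
    intro u
    induction u using TensorProduct.induction_on with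
    | zero => simp
    | tmul y c =>
      have h2 : (∑ p ∈ s, PsiAux ε p.1 (y ⊗ₜ[K] c) ⊗ₜ[K] p.2) =
          y ⊗ₜ[K] ∑ p ∈ s, ε (c * p.1) • p.2 := by
        rw [TensorProduct.tmul_sum]
        refine Finset.sum_congr rfl fun p _ => ?_
        rw [PsiAux_tmul, TensorProduct.smul_tmul, TensorProduct.tmul_smul]
      rw [h2, key_counit_l c]
    | add u v hu hv =>
      simp only [map_add, TensorProduct.add_tmul, Finset.sum_add_distrib, hu, hv]
  exact claim (X.co x)

lemma hom_heq_mod {X X' Y Y' : RightModuleOver K A} (hX : X = X') (hY : Y = Y')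
    (f : X ⟶ Y) (f' : X' ⟶ Y') (h : HEq f.1 f'.1) : HEq f f' := by
  subst hX; subst hY; exact heq_of_eq (Subtype.ext (eq_of_heq h))

lemma hom_heq_comod {X X' Y Y' : RightComoduleOver K A δ ε} (hX : X = X') (hY : Y = Y')
    (f : X ⟶ Y) (f' : X' ⟶ Y') (h : HEq f.1 f'.1) : HEq f f' := by
  subst hX; subst hY; exact heq_of_eq (Subtype.ext (eq_of_heq h))

end MainHelpers

set_option maxHeartbeats 2000000 in
/-- Over a Frobenius algebra `A`, the category of right `A`-modules
is isomorphic to the category of right `A`-comodules, via the functor `F` sending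
`(M, m)` to `(M, ∇_m)` (identity on underlying maps), with inverse `G` sending
`(M, ∇)` to `(M, m_∇)`. -/
theorem modules_iso_comodules [FiniteDimensional K A]
    (hcoassoc : ∀ a : A,
      (TensorProduct.assoc K A A A)
          ((TensorProduct.map δ (LinearMap.id : A →ₗ[K] A)) (δ a)) =
        (TensorProduct.map (LinearMap.id : A →ₗ[K] A) δ) (δ a))
    (hcounit_l : ∀ a : A,
      (TensorProduct.lid K A)
          ((TensorProduct.map ε (LinearMap.id : A →ₗ[K] A)) (δ a)) = a)
    (hcounit_r : ∀ a : A,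
      (TensorProduct.rid K A)
          ((TensorProduct.map (LinearMap.id : A →ₗ[K] A) ε) (δ a)) = a)
    (hbimod : ∀ a x b : A,
      δ (a * x * b) =
        (TensorProduct.map (LinearMap.mulLeft K a) (LinearMap.mulRight K b)) (δ x)) :
    ∃ (F : RightModuleOver K A ⥤ RightComoduleOver K A δ ε)
      (G : RightComoduleOver K A δ ε ⥤ RightModuleOver K A),
      F ⋙ G = 𝟭 (RightModuleOver K A) ∧
      G ⋙ F = 𝟭 (RightComoduleOver K A δ ε) ∧
      (∀ X : RightModuleOver K A, (F.obj X).V = X.V) ∧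
      (∀ X : RightModuleOver K A, HEq (F.obj X).co (nablaOf K A δ X.act)) ∧
      (∀ (X Y : RightModuleOver K A) (f : X ⟶ Y), HEq (F.map f).1 f.1) ∧
      (∀ X : RightComoduleOver K A δ ε, (G.obj X).V = X.V) ∧
      (∀ X : RightComoduleOver K A δ ε, HEq (G.obj X).act (modOf K A ε X.co)) ∧
      (∀ (X Y : RightComoduleOver K A δ ε) (f : X ⟶ Y), HEq (G.map f).1 f.1) := by
  obtain ⟨s, hs⟩ := TensorProduct.exists_finset (δ (1 : A))
  have keyL : ∀ c : A, δ c = ∑ p ∈ s, (c * p.1) ⊗ₜ[K] p.2 := by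
    intro c
    have h := hbimod c 1 1
    rw [mul_one, mul_one, LinearMap.mulRight_one, hs] at h
    rw [h]
    simp [LinearMap.mulLeft_apply]
  have keyR : ∀ c : A, δ c = ∑ p ∈ s, p.1 ⊗ₜ[K] (p.2 * c) := by
    intro c
    have h := hbimod 1 1 c
    rw [one_mul, one_mul, LinearMap.mulLeft_one, hs] at h
    rw [h]
    simp [LinearMap.mulRight_apply]
  have key_counit_r : ∀ c : A, (∑ p ∈ s, ε (p.2 * c) • p.1) = c := by
    intro c
    have h := hcounit_r c
    rw [keyR c] at h
    simpa using h
  have key_counit_l : ∀ c : A, (∑ p ∈ s, ε (c * p.1) • p.2) = c := by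
    intro c
    have h := hcounit_l c
    rw [keyL c] at h
    simpa using h
  refine ⟨
    { obj := fun X =>
        { V := X.V
          co := nablaOf K A δ X.act
          co_coassoc := Hcoassoc δ s hs keyL hcoassoc X
          co_counit := Hcounit δ ε s hs key_counit_r X }
      map := fun {X Y} f => ⟨f.1, HmapF δ s hs X Y f⟩
      map_id := fun X => Subtype.ext rfl
      map_comp := fun f g => Subtype.ext rfl },
    { obj := fun X =>
        { V := X.V
          act := modOf K A ε X.co
          act_act := Hact_act δ ε s keyL key_counit_r X
          act_one := Hact_one δ ε X }
      map := fun {X Y} f => ⟨f.1, HmapG δ ε X Y f⟩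
      map_id := fun X => Subtype.ext rfl
      map_comp := fun f g => Subtype.ext rfl },
    ?_, ?_, fun X => rfl, fun X => HEq.rfl, fun X Y f => HEq.rfl,
    fun X => rfl, fun X => HEq.rfl, fun X Y f => HEq.rfl⟩
  · refine Functor.hext (fun X => ?_) (fun X Y f => ?_)
    · exact rmo_ext _ X rfl HEq.rfl HEq.rfl
        (heq_of_eq (Hround1 δ ε s hs key_counit_r X))
    · apply hom_heq_mod
      · exact rmo_ext _ X rfl HEq.rfl HEq.rfl
          (heq_of_eq (Hround1 δ ε s hs key_counit_r X))
      · exact rmo_ext _ Y rfl HEq.rfl HEq.rfl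
          (heq_of_eq (Hround1 δ ε s hs key_counit_r Y))
      · exact HEq.rfl
  · refine Functor.hext (fun X => ?_) (fun X Y f => ?_)
    · exact rcmo_ext δ ε _ X rfl HEq.rfl HEq.rfl
        (heq_of_eq (Hround2 δ ε s hs key_counit_l X))
    · apply hom_heq_comod
      · exact rcmo_ext δ ε _ X rfl HEq.rfl HEq.rfl
          (heq_of_eq (Hround2 δ ε s hs key_counit_l X))
      · exact rcmo_ext δ ε _ Y rfl HEq.rfl HEq.rfl
          (heq_of_eq (Hround2 δ ε s hs key_counit_l Y))
      · exact HEq.rfl
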